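/- Let E be an uncountable set with the discrete topology, let X = E ∪ {∞} be its one-point (Aleksandrov) compactification, and let E = E₁ ⊔ E₂ be a partition of E into two disjoint uncountable sets. Define f : E → ℝ by f(x) = 1 if x ∈ E₁ and f(x) = 0 if x ∈ E₂. Then there is no mapping g : X → ℝ of the first Lebesgue class (i.e. such that g⁻¹(V) is an Fσ-set in X for every open V ⊆ ℝ) with g restricted to E equal to f. -/
import Mathlib


/-- A set is an Fσ-set if it is a countable union of closed sets. -/
def IsFsigma {X : Type*} [TopologicalSpace X] (A : Set X) : Prop :=
  ∃ F : ℕ → Set X, (∀ n, IsClosed (F n)) ∧ A = ⋃ n, F n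

/-- A mapping is of the first Lebesgue class if the preimage of every open set is Fσ. -/
def LebesgueClassOne {X Y : Type*} [TopologicalSpace X] [TopologicalSpace Y] (g : X → Y) : Prop :=
  ∀ V : Set Y, IsOpen V → IsFsigma (g ⁻¹' V)

/-- `E` is an H₁-retract of `X` if there is a first Lebesgue class map `r : X → E`
fixing the points of `E`. -/
def IsH1Retract {X : Type*} [TopologicalSpace X] (E : Set X) : Prop :=
  ∃ r : X → E, (∀ x : E, r x = x) ∧ LebesgueClassOne r

/-- An Fσ set in the one-point compactification of a discrete space that does not
contain `∞` is countable. -/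
lemma countable_of_isFsigma_of_infty_notMem {E : Type*} [TopologicalSpace E]
    [DiscreteTopology E] {A : Set (OnePoint E)} (hA : IsFsigma A)
    (hinf : OnePoint.infty ∉ A) : A.Countable := by
  obtain ⟨F, hFc, rfl⟩ := hA
  refine Set.countable_iUnion fun n => ?_
  have hn : OnePoint.infty ∉ F n := fun h => hinf (Set.mem_iUnion.2 ⟨n, h⟩)
  have := (OnePoint.isClosed_iff_of_notMem hn).1 (hFc n)
  have hfin : ((↑) ⁻¹' F n : Set E).Finite := this.2.finite_of_discrete
  have : F n ⊆ (↑) '' ((↑) ⁻¹' F n : Set E) := by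
    intro x hx
    cases x with
    | infty => exact absurd hx hn
    | coe y => exact ⟨y, hx, rfl⟩
  exact (hfin.image _).countable.mono this

/-- The characteristic function of an uncountable-co-uncountable partition of an uncountable
discrete space `E` admits no first Lebesgue class extension to the one-point
compactification of `E`. -/
theorem no_lebesgueClassOne_extension_onePoint {E : Type*} [TopologicalSpace E]
    [DiscreteTopology E] [Uncountable E]
    (E₁ E₂ : Set E) (h1 : ¬ E₁.Countable) (h2 : ¬ E₂.Countable)
    (hdisj : Disjoint E₁ E₂) (hunion : E₁ ∪ E₂ = Set.univ)
    [DecidablePred (· ∈ E₁)]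
    (f : E → ℝ) (hf : ∀ x, f x = if x ∈ E₁ then (1:ℝ) else 0) :
    ¬ ∃ g : OnePoint E → ℝ, LebesgueClassOne g ∧ ∀ x : E, g (x : OnePoint E) = f x := by
  rintro ⟨g, hg, hgf⟩
  have hA : IsFsigma (g ⁻¹' {y | (1:ℝ)/2 < y}) := hg _ (isOpen_lt continuous_const continuous_id)
  have hB : IsFsigma (g ⁻¹' {y | y < (1:ℝ)/2}) := hg _ (isOpen_lt continuous_id continuous_const)
  have hE1 : E₁ ⊆ (fun x : E => (x : OnePoint E)) ⁻¹' (g ⁻¹' {y | (1:ℝ)/2 < y}) := by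
    intro x hx
    simp only [Set.mem_preimage, Set.mem_setOf_eq, hgf x, hf x, if_pos hx]
    norm_num
  have hE2 : E₂ ⊆ (fun x : E => (x : OnePoint E)) ⁻¹' (g ⁻¹' {y | y < (1:ℝ)/2}) := by
    intro x hx
    have hx1 : x ∉ E₁ := fun h => hdisj.le_bot ⟨h, hx⟩
    simp only [Set.mem_preimage, Set.mem_setOf_eq, hgf x, hf x, if_neg hx1]
    norm_num
  by_cases hinf : OnePoint.infty ∈ g ⁻¹' {y | (1:ℝ)/2 < y}
  · have hinf2 : OnePoint.infty ∉ g ⁻¹' {y | y < (1:ℝ)/2} := by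
      simp only [Set.mem_preimage, Set.mem_setOf_eq] at hinf ⊢
      linarith
    have := countable_of_isFsigma_of_infty_notMem hB hinf2
    exact h2 ((this.preimage OnePoint.coe_injective).mono hE2)
  · have := countable_of_isFsigma_of_infty_notMem hA hinf
    exact h1 ((this.preimage OnePoint.coe_injective).mono hE1)
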